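/- Let α, β ∈ ℝ and η ∈ {1, −1}. Then (𝔤₄, g, J) is a second kind algebraic Wanas soliton associated to the canonical connection ∇⁰ if and only if one of the following holds: (i) α = 0, β = η, c = −1, with De₁ = 0, De₂ = −e₂ + ηe₃, De₃ = −ηe₂ + e₃; (ii) α = 0, β = −η, c = −11, with De₁ = 0, De₂ = 7e₂, De₃ = 7e₃. -/

import Mathlib

noncomputable section

/-- The underlying vector space `ℝ³`. -/
abbrev V : Type := Fin 3 → ℝ

/-- The basis vector `e₁`. -/
def e1 : V := ![1, 0, 0]

/-- The basis vector `e₂`. -/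
def e2 : V := ![0, 1, 0]

/-- The basis vector `e₃`. -/
def e3 : V := ![0, 0, 1]

/-- The Lorentzian metric `g` with `g(e₁,e₁) = g(e₂,e₂) = 1`, `g(e₃,e₃) = -1`. -/
def g (x y : V) : ℝ := x 0 * y 0 + x 1 * y 1 - x 2 * y 2

/-- The Lie bracket. -/
def br (α β η : ℝ) (x y : V) : V :=
  (x 0 * y 1 - x 1 * y 0) • (-e2 + (2 * η - β) • e3) + (x 0 * y 2 - x 2 * y 0) • (-(β • e2) + e3) +
    (x 1 * y 2 - x 2 * y 1) • (α • e1)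

/-- The canonical connection `∇⁰`. -/
def nab (α β η : ℝ) (x y : V) : V :=
  (x 1 * y 0) • e2 + (x 1 * y 1) • (-e1) + (x 2 * y 0) • ((α / 2 + η) • e2) +
    (x 2 * y 1) • (-((α / 2 + η) • e1))

/-- The torsion `T⁰(X,Y) = ∇⁰_X Y - ∇⁰_Y X - [X,Y]`. -/
def T (α β η : ℝ) (x y : V) : V := nab α β η x y - nab α β η y x - br α β η x y

/-- The tensor `A⁰(X,Y)Z = T⁰(T⁰(X,Y),Z)`. -/
def A (α β η : ℝ) (x y z : V) : V := T α β η (T α β η x y) z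

/-- The curvature `R⁰(X,Y)Z = ∇⁰_X ∇⁰_Y Z - ∇⁰_Y ∇⁰_X Z - ∇⁰_{[X,Y]} Z`. -/
def Rc (α β η : ℝ) (x y z : V) : V :=
  nab α β η x (nab α β η y z) - nab α β η y (nab α β η x z) - nab α β η (br α β η x y) z

/-- The Wanas tensor `W⁰(X,Y)Z = R⁰(X,Y)Z - A⁰(X,Y)Z`. -/
def W (α β η : ℝ) (x y z : V) : V := Rc α β η x y z - A α β η x y z

/-- `w⁰(X,Y) = -g(W⁰(X,e₁)Y,e₁) - g(W⁰(X,e₂)Y,e₂) + g(W⁰(X,e₃)Y,e₃)`. -/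
def w (α β η : ℝ) (x y : V) : ℝ :=
  -g (W α β η x e1 y) e1 - g (W α β η x e2 y) e2 + g (W α β η x e3 y) e3

/-- `w̃⁰(X,Y) = (w⁰(X,Y) + w⁰(Y,X))/2`. -/
def wt (α β η : ℝ) (x y : V) : ℝ := (w α β η x y + w α β η y x) / 2

/-- `D` is a derivation of the Lie algebra. -/
def IsDeriv (α β η : ℝ) (D : V →ₗ[ℝ] V) : Prop :=
  ∀ x y, D (br α β η x y) = br α β η (D x) y + br α β η x (D y)
lemma decomp (x : V) : x = x 0 • e1 + x 1 • e2 + x 2 • e3 := by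
  funext j; fin_cases j <;> simp [e1, e2, e3]

lemma vec_ext (v : V) (a b c : ℝ) (h0 : v 0 = a) (h1 : v 1 = b) (h2 : v 2 = c) :
    v = ![a, b, c] := by
  funext j; fin_cases j
  · exact h0
  · exact h1
  · exact h2

lemma e1_0 : e1 0 = 1 := rfl
lemma e1_1 : e1 1 = 0 := rfl
lemma e1_2 : e1 2 = 0 := rfl
lemma e2_0 : e2 0 = 0 := rfl
lemma e2_1 : e2 1 = 1 := rfl
lemma e2_2 : e2 2 = 0 := rfl
lemma e3_0 : e3 0 = 0 := rfl
lemma e3_1 : e3 1 = 0 := rfl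
lemma e3_2 : e3 2 = 1 := rfl

lemma gcomp1 (v : V) : g v e1 = v 0 := by simp [g, e1]
lemma gcomp2 (v : V) : g v e2 = v 1 := by simp [g, e2]
lemma gcomp3 (v : V) : g v e3 = -(v 2) := by simp [g, e3]

lemma lin_apply (f : V →ₗ[ℝ] V) (v : V) :
    f v = v 0 • f e1 + v 1 • f e2 + v 2 • f e3 := by
  conv_lhs => rw [decomp v]
  simp [map_add, map_smul]

variable {α β η : ℝ} {tWan : V →ₗ[ℝ] V}

lemma tW1 (htWan : ∀ x y, wt α β η x y = g (tWan x) y) : tWan e1 = ![-2 - 2*η^2 + 5*β*η - 2*β^2 - α*η + α*β/2, 0, 0] := by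
  refine vec_ext _ _ _ _ ?_ ?_ ?_
  · rw [← gcomp1 (tWan e1), ← htWan e1 e1]
    simp [wt, w, W, Rc, A, T, nab, br, g, e1, e2, e3]; ring
  · rw [← gcomp2 (tWan e1), ← htWan e1 e2]
    simp [wt, w, W, Rc, A, T, nab, br, g, e1, e2, e3]
  · have h := htWan e1 e3
    rw [gcomp3] at h
    have h' : tWan e1 2 = -(wt α β η e1 e3) := by linarith
    rw [h']
    simp [wt, w, W, Rc, A, T, nab, br, g, e1, e2, e3]

lemma tW2 (htWan : ∀ x y, wt α β η x y = g (tWan x) y) : tWan e2 = ![0, -1 - 2*η^2 + β*η + 3*α*η - 3*α*β/2, η/2 + β/2 - 3*α/4] := by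
  refine vec_ext _ _ _ _ ?_ ?_ ?_
  · rw [← gcomp1 (tWan e2), ← htWan e2 e1]
    simp [wt, w, W, Rc, A, T, nab, br, g, e1, e2, e3]
  · rw [← gcomp2 (tWan e2), ← htWan e2 e2]
    simp [wt, w, W, Rc, A, T, nab, br, g, e1, e2, e3]; ring
  · have h := htWan e2 e3
    rw [gcomp3] at h
    have h' : tWan e2 2 = -(wt α β η e2 e3) := by linarith
    rw [h']
    simp [wt, w, W, Rc, A, T, nab, br, g, e1, e2, e3]; ring

lemma tW3 (htWan : ∀ x y, wt α β η x y = g (tWan x) y) : tWan e3 = ![0, -η/2 - β/2 + 3*α/4, -2*η^2 + 2*β*η - α*β + α^2/2] := by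
  refine vec_ext _ _ _ _ ?_ ?_ ?_
  · rw [← gcomp1 (tWan e3), ← htWan e3 e1]
    simp [wt, w, W, Rc, A, T, nab, br, g, e1, e2, e3]
  · rw [← gcomp2 (tWan e3), ← htWan e3 e2]
    simp [wt, w, W, Rc, A, T, nab, br, g, e1, e2, e3]; ring
  · have h := htWan e3 e3
    rw [gcomp3] at h
    have h' : tWan e3 2 = -(wt α β η e3 e3) := by linarith
    rw [h']
    simp [wt, w, W, Rc, A, T, nab, br, g, e1, e2, e3]; ring

lemma solve1 (a b c : ℝ)
    (hE1 : -5 - c + 5*b - b^2 + a/2 - a*b = 0)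
    (hE2 : 9 + 2*c - 14*b - b*c + 8*b^2 - 2*b^3 - 5/2*a + 2*a*b + a^2 - 1/2*a^2*b = 0)
    (hE3 : -1 - 4*b - b*c + 6*b^2 - 2*b^3 + 3/2*a - 4*a*b + a*b^2 + 1/2*a^2*b = 0)
    (hE5 : a + a*c + 2*a*b - 2*a*b^2 - 4*a^2 + 3*a^2*b - 1/2*a^3 = 0) :
    (a = 0 ∧ b = 1 ∧ c = -1) ∨ (a = 0 ∧ b = -1 ∧ c = -11) := by
  have hF1 : -1 + b + b^2 - b^3 - 3/2*a - 1/2*a*b + a*b^2 + a^2 - 1/2*a^2*b = 0 := by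
    linear_combination hE2 + (2 - b) * hE1
  have hF2 : -1 + b + b^2 - b^3 + 3/2*a - 9/2*a*b + 2*a*b^2 + 1/2*a^2*b = 0 := by
    linear_combination hE3 - b * hE1
  have hF4 : -4*a + 7*a*b - 3*a*b^2 - 7/2*a^2 + 2*a^2*b - 1/2*a^3 = 0 := by
    linear_combination hE5 + a * hE1
  by_cases ha : a = 0
  · subst ha
    have hb : (b - 1)^2 * (b + 1) = 0 := by linear_combination -hF1
    rcases mul_eq_zero.mp hb with h1 | h2
    · have hb1 : b = 1 := by
        have := sq_eq_zero_iff.mp h1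
        linarith
      subst hb1
      exact Or.inl ⟨rfl, rfl, by linarith⟩
    · have hb1 : b = -1 := by linarith
      subst hb1
      exact Or.inr ⟨rfl, rfl, by linarith⟩
  · exfalso
    have hP : a * (-3 + 4*b - b^2 + a - a*b) = 0 := by linear_combination hF1 - hF2
    have hQ := (mul_eq_zero.mp hP).resolve_left ha
    by_cases hb : b = 1
    · subst hb
      have ha2 : a * (a/2 - 1) = 0 := by linear_combination hF1
      have ha2' : a = 2 := by
        have := (mul_eq_zero.mp ha2).resolve_left ha; linarith
      subst ha2'
      norm_num at hF4
    · have hb' : (1 : ℝ) - b ≠ 0 := fun h => hb (by linarith)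
      have key : (1 - b) * (a - (3 - b)) = 0 := by linear_combination hQ
      have ha3 : a = 3 - b := by
        have := (mul_eq_zero.mp key).resolve_left hb'; linarith
      subst ha3
      nlinarith [hF1, hF4, sq_nonneg (173*b - 283)]

lemma solve2 (a b c : ℝ)
    (hE1 : -5 - c - 5*b - b^2 - a/2 - a*b = 0)
    (hE2 : -9 - 2*c - 14*b - b*c - 8*b^2 - 2*b^3 - 5/2*a - 2*a*b - a^2 - 1/2*a^2*b = 0)
    (hE3 : 1 - 4*b - b*c - 6*b^2 - 2*b^3 + 3/2*a + 4*a*b + a*b^2 + 1/2*a^2*b = 0)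
    (hE5 : a + a*c - 2*a*b - 2*a*b^2 + 4*a^2 + 3*a^2*b - 1/2*a^3 = 0) :
    (a = 0 ∧ b = -1 ∧ c = -1) ∨ (a = 0 ∧ b = 1 ∧ c = -11) := by
  have hF1 : 1 + b - b^2 - b^3 - 3/2*a + 1/2*a*b + a*b^2 - a^2 - 1/2*a^2*b = 0 := by
    linear_combination hE2 - (2 + b) * hE1
  have hF2 : 1 + b - b^2 - b^3 + 3/2*a + 9/2*a*b + 2*a*b^2 + 1/2*a^2*b = 0 := by
    linear_combination hE3 - b * hE1
  have hF4 : -4*a - 7*a*b - 3*a*b^2 + 7/2*a^2 + 2*a^2*b - 1/2*a^3 = 0 := by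
    linear_combination hE5 + a * hE1
  by_cases ha : a = 0
  · subst ha
    have hb : (b + 1)^2 * (b - 1) = 0 := by linear_combination -hF1
    rcases mul_eq_zero.mp hb with h1 | h2
    · have hb1 : b = -1 := by
        have := sq_eq_zero_iff.mp h1
        linarith
      subst hb1
      exact Or.inl ⟨rfl, rfl, by linarith⟩
    · have hb1 : b = 1 := by linarith
      subst hb1
      exact Or.inr ⟨rfl, rfl, by linarith⟩
  · exfalso
    have hP : a * (-3 - 4*b - b^2 - a - a*b) = 0 := by linear_combination hF1 - hF2
    have hQ := (mul_eq_zero.mp hP).resolve_left ha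
    by_cases hb : b = -1
    · subst hb
      have ha2 : a * (1 + a/2) = 0 := by linear_combination -hF1
      have ha2' : a = -2 := by
        have := (mul_eq_zero.mp ha2).resolve_left ha; linarith
      subst ha2'
      norm_num at hF4
    · have hb' : (1 : ℝ) + b ≠ 0 := fun h => hb (by linarith)
      have key : (1 + b) * (a + b + 3) = 0 := by linear_combination -hQ
      have ha3 : a = -3 - b := by
        have := (mul_eq_zero.mp key).resolve_left hb'; linarith
      subst ha3
      nlinarith [hF1, hF4, sq_nonneg (173*b + 283)]

set_option maxHeartbeats 4000000 in
theorem g4_second_kind_algebraic_Wanas_soliton (α β η : ℝ) (hη : η = 1 ∨ η = -1)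
    (tWan : V →ₗ[ℝ] V) (htWan : ∀ x y, wt α β η x y = g (tWan x) y)
    (c : ℝ) (D : V →ₗ[ℝ] V) :
    (IsDeriv α β η D ∧ ∀ x, tWan x = c • x + D x) ↔
      (α = 0 ∧ β = η ∧ c = -1 ∧
        D e1 = 0 ∧ D e2 = -e2 + η • e3 ∧ D e3 = -(η • e2) + e3) ∨
      (α = 0 ∧ β = -η ∧ c = -11 ∧
        D e1 = 0 ∧ D e2 = (7 : ℝ) • e2 ∧ D e3 = (7 : ℝ) • e3) := by
  have ht1 := tW1 htWan
  have ht2 := tW2 htWan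
  have ht3 := tW3 htWan
  constructor
  · rintro ⟨hDeriv, hSol⟩
    have hd1 : D e1 = ![(-2 - 2*η^2 + 5*β*η - 2*β^2 - α*η + α*β/2) - c, 0, 0] := by
      have h := hSol e1
      rw [ht1] at h
      have h0 := congrFun h 0; have h1 := congrFun h 1; have h2 := congrFun h 2
      simp only [Pi.add_apply, Pi.smul_apply, smul_eq_mul, Matrix.cons_val_zero,
        Matrix.cons_val_one, Matrix.cons_val_two, Matrix.tail_cons, Matrix.head_cons,
        e1_0, e1_1, e1_2, mul_one, mul_zero, add_zero, zero_add] at h0 h1 h2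
      exact vec_ext _ _ _ _ (by linarith) (by linarith) (by linarith)
    have hd2 : D e2 = ![0, (-1 - 2*η^2 + β*η + 3*α*η - 3*α*β/2) - c, η/2 + β/2 - 3*α/4] := by
      have h := hSol e2
      rw [ht2] at h
      have h0 := congrFun h 0; have h1 := congrFun h 1; have h2 := congrFun h 2
      simp only [Pi.add_apply, Pi.smul_apply, smul_eq_mul, Matrix.cons_val_zero,
        Matrix.cons_val_one, Matrix.cons_val_two, Matrix.tail_cons, Matrix.head_cons,
        e2_0, e2_1, e2_2, mul_one, mul_zero, add_zero, zero_add] at h0 h1 h2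
      exact vec_ext _ _ _ _ (by linarith) (by linarith) (by linarith)
    have hd3 : D e3 = ![0, -η/2 - β/2 + 3*α/4, (-2*η^2 + 2*β*η - α*β + α^2/2) - c] := by
      have h := hSol e3
      rw [ht3] at h
      have h0 := congrFun h 0; have h1 := congrFun h 1; have h2 := congrFun h 2
      simp only [Pi.add_apply, Pi.smul_apply, smul_eq_mul, Matrix.cons_val_zero,
        Matrix.cons_val_one, Matrix.cons_val_two, Matrix.tail_cons, Matrix.head_cons,
        e3_0, e3_1, e3_2, mul_one, mul_zero, add_zero, zero_add] at h0 h1 h2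
      exact vec_ext _ _ _ _ (by linarith) (by linarith) (by linarith)
    have hb12 := hDeriv e1 e2
    have hb13 := hDeriv e1 e3
    have hb23 := hDeriv e2 e3
    rw [lin_apply D (br α β η e1 e2), hd1, hd2, hd3] at hb12
    rw [lin_apply D (br α β η e1 e3), hd1, hd2, hd3] at hb13
    rw [lin_apply D (br α β η e2 e3), hd1, hd2, hd3] at hb23
    have E12_1 := congrFun hb12 1
    have E12_2 := congrFun hb12 2
    have E13_1 := congrFun hb13 1
    have E23_0 := congrFun hb23 0
    simp [br, e1, e2, e3] at E12_1 E12_2 E13_1 E23_0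
    rcases hη with rfl | rfl
    · have hE1 : -5 - c + 5*β - β^2 + α/2 - α*β = 0 := by linear_combination E12_1
      have hE2 : 9 + 2*c - 14*β - β*c + 8*β^2 - 2*β^3 - 5/2*α + 2*α*β + α^2 - 1/2*α^2*β = 0 := by
        linear_combination E12_2
      have hE3 : -1 - 4*β - β*c + 6*β^2 - 2*β^3 + 3/2*α - 4*α*β + α*β^2 + 1/2*α^2*β = 0 := by
        linear_combination E13_1
      have hE5 : α + α*c + 2*α*β - 2*α*β^2 - 4*α^2 + 3*α^2*β - 1/2*α^3 = 0 := by
        linear_combination E23_0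
      rcases solve1 α β c hE1 hE2 hE3 hE5 with ⟨ha, hb, hc⟩ | ⟨ha, hb, hc⟩
      · subst ha; subst hb; subst hc
        refine Or.inl ⟨rfl, rfl, rfl, ?_, ?_, ?_⟩
        · rw [hd1]; funext j; fin_cases j <;> norm_num
        · rw [hd2]; funext j; fin_cases j <;> simp [e2, e3] <;> norm_num
        · rw [hd3]; funext j; fin_cases j <;> simp [e2, e3] <;> norm_num
      · subst ha; subst hb; subst hc
        refine Or.inr ⟨rfl, by norm_num, rfl, ?_, ?_, ?_⟩
        · rw [hd1]; funext j; fin_cases j <;> norm_num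
        · rw [hd2]; funext j; fin_cases j <;> simp [e2, e3] <;> norm_num
        · rw [hd3]; funext j; fin_cases j <;> simp [e2, e3] <;> norm_num
    · have hE1 : -5 - c - 5*β - β^2 - α/2 - α*β = 0 := by linear_combination E12_1
      have hE2 : -9 - 2*c - 14*β - β*c - 8*β^2 - 2*β^3 - 5/2*α - 2*α*β - α^2 - 1/2*α^2*β = 0 := by
        linear_combination E12_2
      have hE3 : 1 - 4*β - β*c - 6*β^2 - 2*β^3 + 3/2*α + 4*α*β + α*β^2 + 1/2*α^2*β = 0 := by
        linear_combination E13_1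
      have hE5 : α + α*c - 2*α*β - 2*α*β^2 + 4*α^2 + 3*α^2*β - 1/2*α^3 = 0 := by
        linear_combination E23_0
      rcases solve2 α β c hE1 hE2 hE3 hE5 with ⟨ha, hb, hc⟩ | ⟨ha, hb, hc⟩
      · subst ha; subst hb; subst hc
        refine Or.inl ⟨rfl, rfl, rfl, ?_, ?_, ?_⟩
        · rw [hd1]; funext j; fin_cases j <;> norm_num
        · rw [hd2]; funext j; fin_cases j <;> simp [e2, e3] <;> norm_num
        · rw [hd3]; funext j; fin_cases j <;> simp [e2, e3] <;> norm_num
      · subst ha; subst hb; subst hc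
        refine Or.inr ⟨rfl, by norm_num, rfl, ?_, ?_, ?_⟩
        · rw [hd1]; funext j; fin_cases j <;> norm_num
        · rw [hd2]; funext j; fin_cases j <;> simp [e2, e3] <;> norm_num
        · rw [hd3]; funext j; fin_cases j <;> simp [e2, e3] <;> norm_num
  · have deriv_check : ∀ (a b h : ℝ) (v1 v2 v3 : V), D e1 = v1 → D e2 = v2 → D e3 = v3 →
        (∀ x y : V, (br a b h x y) 0 • v1 + (br a b h x y) 1 • v2 + (br a b h x y) 2 • v3 =
          br a b h (x 0 • v1 + x 1 • v2 + x 2 • v3) y + br a b h x (y 0 • v1 + y 1 • v2 + y 2 • v3)) →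
        IsDeriv a b h D := by
      intro a b h v1 v2 v3 hv1 hv2 hv3 hmain x y
      rw [lin_apply D (br _ _ _ x y), lin_apply D x, lin_apply D y, hv1, hv2, hv3]
      exact hmain x y
    rintro (⟨ha, hb, hc, h1, h2, h3⟩ | ⟨ha, hb, hc, h1, h2, h3⟩) <;>
        rcases hη with rfl | rfl <;> subst ha <;> subst hb <;> subst hc <;> constructor
    case' mpr.inl.inl.left | mpr.inl.inr.left | mpr.inr.inl.left | mpr.inr.inr.left =>
      refine deriv_check _ _ _ _ _ _ h1 h2 h3 (fun x y => ?_)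
      funext j
      fin_cases j <;> simp [br, e1, e2, e3] <;> ring
    case' mpr.inl.inl.right | mpr.inl.inr.right | mpr.inr.inl.right | mpr.inr.inr.right =>
      intro x
      rw [lin_apply tWan x, ht1, ht2, ht3, lin_apply D x, h1, h2, h3]
      funext j
      fin_cases j <;> simp [e1, e2, e3] <;> ring
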